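/- Assume the Y structure. Let d ∈ {0,1} with P(D=d) > 0. Then cov(X, Y | D=d) = [ P(X=1)·P(X=0)·P(Y=1)·P(Y=0) / P(D=d)^2 ] · ( p_{d|1} − p_{d|0} ) · [ p_{d|1}·( p_{C=1|00}·p_{C=1|11} − p_{C=1|10}·p_{C=1|01} ) − p_{d|0}·( p_{C=0|00}·p_{C=0|11} − p_{C=0|10}·p_{C=0|01} ) ]. -/

import Mathlib

open MeasureTheory ProbabilityTheory

variable {Ω : Type*} [MeasurableSpace Ω]

/-- The event that the random variable `X` takes the value `x`. -/
def ev (X : Ω → ℝ) (x : ℝ) : Set Ω := {ω | X ω = x}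

/-- The probability of an event, as a real number. -/
noncomputable def pr (P : Measure Ω) (s : Set Ω) : ℝ := (P s).toReal

/-- The conditional probability `P(s | t)`, as a real number. -/
noncomputable def cpr (P : Measure Ω) (s t : Set Ω) : ℝ := pr (P[|t]) s

/-- The covariance of two real-valued random variables. -/
noncomputable def rcov (P : Measure Ω) (X Y : Ω → ℝ) : ℝ :=
  ∫ ω, (X ω - ∫ ω', X ω' ∂P) * (Y ω - ∫ ω', Y ω' ∂P) ∂P

/-- The conditional covariance of two real-valued random variables given an event. -/
noncomputable def covCond (P : Measure Ω) (X Y : Ω → ℝ) (t : Set Ω) : ℝ :=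
  rcov (P[|t]) X Y

/-- The conditional variance of a real-valued random variable given an event. -/
noncomputable def varCond (P : Measure Ω) (X : Ω → ℝ) (t : Set Ω) : ℝ :=
  covCond P X X t

/-- A measurable `{0,1}`-valued random variable. -/
def IsBin (X : Ω → ℝ) : Prop := Measurable X ∧ ∀ ω, X ω = 0 ∨ X ω = 1

namespace YBiasAux

lemma ev_ms {X : Ω → ℝ} (hX : Measurable X) (x : ℝ) : MeasurableSet (ev X x) :=
  hX (measurableSet_singleton x)

lemma ev_compl {X : Ω → ℝ} (hX : IsBin X) : ev X 0 = (ev X 1)ᶜ := by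
  ext ω
  simp only [ev, Set.mem_setOf_eq, Set.mem_compl_iff]
  rcases hX.2 ω with h | h <;> simp [h]

lemma pr_nonneg (P : Measure Ω) (s : Set Ω) : 0 ≤ pr P s := ENNReal.toReal_nonneg

lemma pr_mono (P : Measure Ω) [IsFiniteMeasure P] {s t : Set Ω} (h : s ⊆ t) :
    pr P s ≤ pr P t :=
  ENNReal.toReal_mono (measure_ne_top _ _) (measure_mono h)

lemma pr_split (P : Measure Ω) [IsFiniteMeasure P] (s A : Set Ω) (hA : MeasurableSet A) :
    pr P s = pr P (s ∩ A) + pr P (s ∩ Aᶜ) := by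
  unfold pr
  rw [← ENNReal.toReal_add (measure_ne_top _ _) (measure_ne_top _ _), ← Set.diff_eq,
    measure_inter_add_diff s hA]

lemma cpr_eq (P : Measure Ω) [IsFiniteMeasure P] (s t : Set Ω) (ht : MeasurableSet t) :
    cpr P s t = pr P (t ∩ s) / pr P t := by
  unfold cpr pr
  rw [ProbabilityTheory.cond_apply ht, ENNReal.toReal_mul, ENNReal.toReal_inv, inv_mul_eq_div]

lemma integrable_bin (μ : Measure Ω) [IsFiniteMeasure μ] {X : Ω → ℝ} (hX : IsBin X) :
    Integrable X μ := by
  refine (integrable_const (1:ℝ)).mono' hX.1.aestronglyMeasurable ?_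
  refine ae_of_all _ fun ω => ?_
  rcases hX.2 ω with h | h <;> simp [h]

lemma integral_bin (μ : Measure Ω) [IsFiniteMeasure μ] {X : Ω → ℝ} (hX : IsBin X) :
    ∫ ω, X ω ∂μ = pr μ (ev X 1) := by
  have h : ∀ ω, X ω = (ev X 1).indicator (fun _ => (1:ℝ)) ω := by
    intro ω
    rcases hX.2 ω with h | h <;> simp [Set.indicator_apply, ev, h]
  rw [integral_congr_ae (Filter.Eventually.of_forall h)]
  simpa [pr, Measure.real, Pi.one_def] using MeasureTheory.integral_indicator_one (ev_ms hX.1 1)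

lemma integral_bin_mul (μ : Measure Ω) [IsFiniteMeasure μ] {X Y : Ω → ℝ}
    (hX : IsBin X) (hY : IsBin Y) :
    ∫ ω, X ω * Y ω ∂μ = pr μ (ev X 1 ∩ ev Y 1) := by
  have h : ∀ ω, X ω * Y ω = (ev X 1 ∩ ev Y 1).indicator (fun _ => (1:ℝ)) ω := by
    intro ω
    rcases hX.2 ω with h1 | h1 <;> rcases hY.2 ω with h2 | h2 <;>
      simp [Set.indicator_apply, ev, h1, h2]
  rw [integral_congr_ae (Filter.Eventually.of_forall h)]
  simpa [pr, Measure.real, Pi.one_def] using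
    MeasureTheory.integral_indicator_one ((ev_ms hX.1 1).inter (ev_ms hY.1 1))

lemma rcov_bin (μ : Measure Ω) [IsProbabilityMeasure μ] {X Y : Ω → ℝ}
    (hX : IsBin X) (hY : IsBin Y) :
    rcov μ X Y = pr μ (ev X 1 ∩ ev Y 1) - pr μ (ev X 1) * pr μ (ev Y 1) := by
  have hiX := integrable_bin μ hX
  have hiY := integrable_bin μ hY
  have hiXY : Integrable (fun ω => X ω * Y ω) μ := by
    refine (integrable_const (1:ℝ)).mono' (hX.1.mul hY.1).aestronglyMeasurable ?_
    refine ae_of_all _ fun ω => ?_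
    rcases hX.2 ω with h1 | h1 <;> rcases hY.2 ω with h2 | h2 <;> simp [h1, h2]
  unfold rcov
  set a := ∫ ω', X ω' ∂μ with ha
  set b := ∫ ω', Y ω' ∂μ with hb
  have iY' : Integrable (fun ω => a * Y ω) μ := hiY.const_mul a
  have iX' : Integrable (fun ω => b * X ω) μ := hiX.const_mul b
  have iC : Integrable (fun _ : Ω => a * b) μ := integrable_const _
  have iA : Integrable (fun ω => X ω * Y ω - a * Y ω) μ := hiXY.sub iY'
  have iB : Integrable (fun ω => b * X ω - a * b) μ := iX'.sub iC
  have e : ∀ ω, (X ω - a) * (Y ω - b) = (X ω * Y ω - a * Y ω) - (b * X ω - a * b) := by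
    intro ω; ring
  have h1 : ∫ ω, (X ω - a) * (Y ω - b) ∂μ =
      ((∫ ω, X ω * Y ω ∂μ) - ∫ ω, a * Y ω ∂μ) - ((∫ ω, b * X ω ∂μ) - ∫ ω, a * b ∂μ) := by
    rw [integral_congr_ae (Filter.Eventually.of_forall e),
      integral_sub iA iB, integral_sub hiXY iY', integral_sub iX' iC]
  rw [h1, integral_const_mul, integral_const_mul, integral_const]
  simp only [Measure.real, measure_univ, ENNReal.toReal_one, smul_eq_mul, one_mul, ← ha, ← hb]
  rw [integral_bin_mul μ hX hY, ha, hb, integral_bin μ hX, integral_bin μ hY]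
  ring

end YBiasAux

open YBiasAux

set_option maxHeartbeats 1600000 in
/-- Y-bias on the covariance scale, conditioning on `D = d`. -/
theorem Y_bias_cov (P : Measure Ω) [IsProbabilityMeasure P]
    (X Y C D : Ω → ℝ) (hX : IsBin X) (hY : IsBin Y) (hC : IsBin C) (hD : IsBin D)
    (hX1 : 0 < pr P (ev X 1)) (hX1' : pr P (ev X 1) < 1)
    (hY1 : 0 < pr P (ev Y 1)) (hY1' : pr P (ev Y 1) < 1)
    (hfact : ∀ x y γ d : ℝ, (x = 0 ∨ x = 1) → (y = 0 ∨ y = 1) → (γ = 0 ∨ γ = 1) →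
      (d = 0 ∨ d = 1) →
      pr P (ev X x ∩ ev Y y ∩ ev C γ ∩ ev D d) =
        pr P (ev X x) * pr P (ev Y y) * cpr P (ev C γ) (ev X x ∩ ev Y y) *
          cpr P (ev D d) (ev C γ))
    (d : ℝ) (hd : d = 0 ∨ d = 1) (hDd : 0 < pr P (ev D d)) :
    covCond P X Y (ev D d) =
      pr P (ev X 1) * pr P (ev X 0) * pr P (ev Y 1) * pr P (ev Y 0) / (pr P (ev D d)) ^ 2 *
        (cpr P (ev D d) (ev C 1) - cpr P (ev D d) (ev C 0)) *
        (cpr P (ev D d) (ev C 1) *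
            (cpr P (ev C 1) (ev X 0 ∩ ev Y 0) * cpr P (ev C 1) (ev X 1 ∩ ev Y 1) -
              cpr P (ev C 1) (ev X 1 ∩ ev Y 0) * cpr P (ev C 1) (ev X 0 ∩ ev Y 1)) -
          cpr P (ev D d) (ev C 0) *
            (cpr P (ev C 0) (ev X 0 ∩ ev Y 0) * cpr P (ev C 0) (ev X 1 ∩ ev Y 1) -
              cpr P (ev C 0) (ev X 1 ∩ ev Y 0) * cpr P (ev C 0) (ev X 0 ∩ ev Y 1))) := by
  have mX : ∀ x : ℝ, MeasurableSet (ev X x) := ev_ms hX.1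
  have mY : ∀ y : ℝ, MeasurableSet (ev Y y) := ev_ms hY.1
  have mC : ∀ γ : ℝ, MeasurableSet (ev C γ) := ev_ms hC.1
  have mD : ∀ δ : ℝ, MeasurableSet (ev D δ) := ev_ms hD.1
  have mXY : ∀ x y : ℝ, MeasurableSet (ev X x ∩ ev Y y) := fun x y => (mX x).inter (mY y)
  have hPDne : pr P (ev D d) ≠ 0 := ne_of_gt hDd
  have hPDne' : P (ev D d) ≠ 0 := by
    intro h; exact hPDne (by simp [pr, h])
  haveI : IsProbabilityMeasure (P[|ev D d]) := cond_isProbabilityMeasure hPDne'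
  -- Step 1: the covariance formula.
  have hcov0 : covCond P X Y (ev D d) =
      pr (P[|ev D d]) (ev X 1 ∩ ev Y 1) -
        pr (P[|ev D d]) (ev X 1) * pr (P[|ev D d]) (ev Y 1) := rcov_bin _ hX hY
  have hc1 : pr (P[|ev D d]) (ev X 1 ∩ ev Y 1) =
      pr P (ev X 1 ∩ ev Y 1 ∩ ev D d) / pr P (ev D d) := by
    have : pr (P[|ev D d]) (ev X 1 ∩ ev Y 1) = cpr P (ev X 1 ∩ ev Y 1) (ev D d) := rfl
    have e1 : ev D d ∩ (ev X 1 ∩ ev Y 1) = ev X 1 ∩ ev Y 1 ∩ ev D d := by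
      ext ω; simp only [Set.mem_inter_iff]; tauto
    rw [this, cpr_eq P _ _ (mD d), e1]
  have hc2 : pr (P[|ev D d]) (ev X 1) =
      (pr P (ev X 1 ∩ ev Y 1 ∩ ev D d) + pr P (ev X 1 ∩ ev Y 0 ∩ ev D d)) / pr P (ev D d) := by
    have h0 : pr (P[|ev D d]) (ev X 1) = cpr P (ev X 1) (ev D d) := rfl
    have e1 : ev D d ∩ ev X 1 ∩ ev Y 1 = ev X 1 ∩ ev Y 1 ∩ ev D d := by
      ext ω; simp only [Set.mem_inter_iff]; tauto
    have e0 : ev D d ∩ ev X 1 ∩ ev Y 0 = ev X 1 ∩ ev Y 0 ∩ ev D d := by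
      ext ω; simp only [Set.mem_inter_iff]; tauto
    rw [h0, cpr_eq P _ _ (mD d),
      pr_split P (ev D d ∩ ev X 1) (ev Y 1) (mY 1), ← ev_compl hY, e1, e0]
  have hc3 : pr (P[|ev D d]) (ev Y 1) =
      (pr P (ev X 1 ∩ ev Y 1 ∩ ev D d) + pr P (ev X 0 ∩ ev Y 1 ∩ ev D d)) / pr P (ev D d) := by
    have h0 : pr (P[|ev D d]) (ev Y 1) = cpr P (ev Y 1) (ev D d) := rfl
    have e1 : ev D d ∩ ev Y 1 ∩ ev X 1 = ev X 1 ∩ ev Y 1 ∩ ev D d := by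
      ext ω; simp only [Set.mem_inter_iff]; tauto
    have e0 : ev D d ∩ ev Y 1 ∩ ev X 0 = ev X 0 ∩ ev Y 1 ∩ ev D d := by
      ext ω; simp only [Set.mem_inter_iff]; tauto
    rw [h0, cpr_eq P _ _ (mD d),
      pr_split P (ev D d ∩ ev Y 1) (ev X 1) (mX 1), ← ev_compl hX, e1, e0]
  -- Step 2: decomposition of the cell-and-D probabilities via the factorization.
  have hN : ∀ x y : ℝ, (x = 0 ∨ x = 1) → (y = 0 ∨ y = 1) →
      pr P (ev X x ∩ ev Y y ∩ ev D d) =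
        pr P (ev X x) * pr P (ev Y y) *
          (cpr P (ev C 1) (ev X x ∩ ev Y y) * cpr P (ev D d) (ev C 1) +
            cpr P (ev C 0) (ev X x ∩ ev Y y) * cpr P (ev D d) (ev C 0)) := by
    intro x y hx hy
    have split := pr_split P (ev X x ∩ ev Y y ∩ ev D d) (ev C 1) (mC 1)
    rw [← ev_compl hC] at split
    have e1 : ev X x ∩ ev Y y ∩ ev D d ∩ ev C 1 = ev X x ∩ ev Y y ∩ ev C 1 ∩ ev D d := by
      ext ω; simp only [Set.mem_inter_iff]; tauto
    have e0 : ev X x ∩ ev Y y ∩ ev D d ∩ ev C 0 = ev X x ∩ ev Y y ∩ ev C 0 ∩ ev D d := by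
      ext ω; simp only [Set.mem_inter_iff]; tauto
    rw [e1, e0, hfact x y 1 d hx hy (Or.inr rfl) hd, hfact x y 0 d hx hy (Or.inl rfl) hd]
      at split
    rw [split]; ring
  -- Step 3: the total probability of `D = d`.
  have hPDsum : pr P (ev D d) =
      pr P (ev X 0 ∩ ev Y 0 ∩ ev D d) + pr P (ev X 0 ∩ ev Y 1 ∩ ev D d) +
        pr P (ev X 1 ∩ ev Y 0 ∩ ev D d) + pr P (ev X 1 ∩ ev Y 1 ∩ ev D d) := by
    have s1 := pr_split P (ev D d) (ev X 1) (mX 1)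
    rw [← ev_compl hX] at s1
    have s2 := pr_split P (ev D d ∩ ev X 1) (ev Y 1) (mY 1)
    rw [← ev_compl hY] at s2
    have s3 := pr_split P (ev D d ∩ ev X 0) (ev Y 1) (mY 1)
    rw [← ev_compl hY] at s3
    have e11 : ev D d ∩ ev X 1 ∩ ev Y 1 = ev X 1 ∩ ev Y 1 ∩ ev D d := by
      ext ω; simp only [Set.mem_inter_iff]; tauto
    have e10 : ev D d ∩ ev X 1 ∩ ev Y 0 = ev X 1 ∩ ev Y 0 ∩ ev D d := by
      ext ω; simp only [Set.mem_inter_iff]; tauto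
    have e01 : ev D d ∩ ev X 0 ∩ ev Y 1 = ev X 0 ∩ ev Y 1 ∩ ev D d := by
      ext ω; simp only [Set.mem_inter_iff]; tauto
    have e00 : ev D d ∩ ev X 0 ∩ ev Y 0 = ev X 0 ∩ ev Y 0 ∩ ev D d := by
      ext ω; simp only [Set.mem_inter_iff]; tauto
    rw [e11, e10] at s2
    rw [e01, e00] at s3
    rw [s1, s2, s3]; ring
  -- Step 4: positivity of the cell probabilities.
  have ha0 : 0 < pr P (ev X 0) := by
    have h := pr_split P Set.univ (ev X 1) (mX 1)
    rw [← ev_compl hX] at h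
    simp only [Set.univ_inter] at h
    have h1 : pr P Set.univ = 1 := by simp [pr]
    rw [h1] at h
    linarith
  have hb0 : 0 < pr P (ev Y 0) := by
    have h := pr_split P Set.univ (ev Y 1) (mY 1)
    rw [← ev_compl hY] at h
    simp only [Set.univ_inter] at h
    have h1 : pr P Set.univ = 1 := by simp [pr]
    rw [h1] at h
    linarith
  have hbsum : pr P (ev Y 1) + pr P (ev Y 0) = 1 := by
    have h := pr_split P Set.univ (ev Y 1) (mY 1)
    rw [← ev_compl hY] at h
    simp only [Set.univ_inter] at h
    have h1 : pr P Set.univ = 1 := by simp [pr]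
    rw [h1] at h
    linarith
  -- the self-quotient formula for the cell probabilities
  have hmul : ∀ x y : ℝ, (x = 0 ∨ x = 1) → (y = 0 ∨ y = 1) →
      pr P (ev X x ∩ ev Y y) = pr P (ev X x) * pr P (ev Y y) *
        (pr P (ev X x ∩ ev Y y) / pr P (ev X x ∩ ev Y y)) := by
    intro x y hx hy
    have sC := pr_split P (ev X x ∩ ev Y y) (ev C 1) (mC 1)
    rw [← ev_compl hC] at sC
    have sD1 := pr_split P (ev X x ∩ ev Y y ∩ ev C 1) (ev D 1) (mD 1)
    rw [← ev_compl hD] at sD1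
    have sD0 := pr_split P (ev X x ∩ ev Y y ∩ ev C 0) (ev D 1) (mD 1)
    rw [← ev_compl hD] at sD0
    rw [hfact x y 1 1 hx hy (Or.inr rfl) (Or.inr rfl),
      hfact x y 1 0 hx hy (Or.inr rfl) (Or.inl rfl)] at sD1
    rw [hfact x y 0 1 hx hy (Or.inl rfl) (Or.inr rfl),
      hfact x y 0 0 hx hy (Or.inl rfl) (Or.inl rfl)] at sD0
    -- sum of the two D-conditional probabilities given C = γ
    have hrsum : ∀ γ : ℝ, cpr P (ev C γ) (ev X x ∩ ev Y y) *
        (cpr P (ev D 1) (ev C γ) + cpr P (ev D 0) (ev C γ)) =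
        cpr P (ev C γ) (ev X x ∩ ev Y y) := by
      intro γ
      have sCD := pr_split P (ev C γ) (ev D 1) (mD 1)
      rw [← ev_compl hD] at sCD
      rw [cpr_eq P _ _ (mC γ), cpr_eq P _ _ (mC γ), cpr_eq P _ _ (mXY x y)]
      by_cases hc : pr P (ev C γ) = 0
      · have h1 : pr P (ev X x ∩ ev Y y ∩ ev C γ) = 0 := by
          have hle := pr_mono P (Set.inter_subset_right (s := ev X x ∩ ev Y y) (t := ev C γ))
          have hge := pr_nonneg P (ev X x ∩ ev Y y ∩ ev C γ)
          rw [hc] at hle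
          linarith
        rw [h1, hc]
        simp
      · rw [← add_div, ← sCD, div_self hc, mul_one]
    have hr1 := hrsum 1
    have hr0 := hrsum 0
    -- q0 + q1 = pr s / pr s
    have hqsum : cpr P (ev C 1) (ev X x ∩ ev Y y) + cpr P (ev C 0) (ev X x ∩ ev Y y) =
        pr P (ev X x ∩ ev Y y) / pr P (ev X x ∩ ev Y y) := by
      rw [cpr_eq P _ _ (mXY x y), cpr_eq P _ _ (mXY x y), ← add_div, ← sC]
    calc pr P (ev X x ∩ ev Y y)
        = pr P (ev X x) * pr P (ev Y y) *
            (cpr P (ev C 1) (ev X x ∩ ev Y y) + cpr P (ev C 0) (ev X x ∩ ev Y y)) := by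
          rw [sC, sD1, sD0]
          linear_combination (pr P (ev X x) * pr P (ev Y y)) * hr1 +
            (pr P (ev X x) * pr P (ev Y y)) * hr0
      _ = _ := by rw [hqsum]
  -- cells are nonvanishing
  have hcell : ∀ x : ℝ, (x = 0 ∨ x = 1) → 0 < pr P (ev X x) →
      pr P (ev X x ∩ ev Y 0) ≠ 0 ∧ pr P (ev X x ∩ ev Y 1) ≠ 0 := by
    intro x hx hax
    have sY := pr_split P (ev X x) (ev Y 1) (mY 1)
    rw [← ev_compl hY] at sY
    rw [hmul x 1 hx (Or.inr rfl), hmul x 0 hx (Or.inl rfl)] at sY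
    have t1le : pr P (ev X x ∩ ev Y 1) / pr P (ev X x ∩ ev Y 1) ≤ 1 := by
      rcases eq_or_ne (pr P (ev X x ∩ ev Y 1)) 0 with h | h
      · simp [h]
      · rw [div_self h]
    have t0le : pr P (ev X x ∩ ev Y 0) / pr P (ev X x ∩ ev Y 0) ≤ 1 := by
      rcases eq_or_ne (pr P (ev X x ∩ ev Y 0)) 0 with h | h
      · simp [h]
      · rw [div_self h]
    have hb1' : pr P (ev Y 0) < 1 := by linarith
    constructor
    · intro h
      have ht0 : pr P (ev X x ∩ ev Y 0) / pr P (ev X x ∩ ev Y 0) = 0 := by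
        rw [h]; simp
      have sY' : pr P (ev X x) = pr P (ev X x) * pr P (ev Y 1) *
          (pr P (ev X x ∩ ev Y 1) / pr P (ev X x ∩ ev Y 1)) := by
        linear_combination sY + (pr P (ev X x) * pr P (ev Y 0)) * ht0
      have e1 : pr P (ev X x) * pr P (ev Y 1) *
          (pr P (ev X x ∩ ev Y 1) / pr P (ev X x ∩ ev Y 1)) ≤
          pr P (ev X x) * pr P (ev Y 1) * 1 :=
        mul_le_mul_of_nonneg_left t1le (le_of_lt (mul_pos hax hY1))
      have e2 : pr P (ev X x) * pr P (ev Y 1) < pr P (ev X x) :=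
        mul_lt_of_lt_one_right hax hY1'
      linarith [sY', e1, e2]
    · intro h
      have ht1 : pr P (ev X x ∩ ev Y 1) / pr P (ev X x ∩ ev Y 1) = 0 := by
        rw [h]; simp
      have sY' : pr P (ev X x) = pr P (ev X x) * pr P (ev Y 0) *
          (pr P (ev X x ∩ ev Y 0) / pr P (ev X x ∩ ev Y 0)) := by
        linear_combination sY + (pr P (ev X x) * pr P (ev Y 1)) * ht1
      have e1 : pr P (ev X x) * pr P (ev Y 0) *
          (pr P (ev X x ∩ ev Y 0) / pr P (ev X x ∩ ev Y 0)) ≤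
          pr P (ev X x) * pr P (ev Y 0) * 1 :=
        mul_le_mul_of_nonneg_left t0le (le_of_lt (mul_pos hax hb0))
      have e2 : pr P (ev X x) * pr P (ev Y 0) < pr P (ev X x) :=
        mul_lt_of_lt_one_right hax hb1'
      linarith [sY', e1, e2]
  have hcell0 := hcell 0 (Or.inl rfl) ha0
  have hcell1 := hcell 1 (Or.inr rfl) hX1
  -- Step 5: complementarity of the C-conditional probabilities.
  have hQ : ∀ x y : ℝ, pr P (ev X x ∩ ev Y y) ≠ 0 →
      cpr P (ev C 0) (ev X x ∩ ev Y y) = 1 - cpr P (ev C 1) (ev X x ∩ ev Y y) := by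
    intro x y hm
    have sC := pr_split P (ev X x ∩ ev Y y) (ev C 1) (mC 1)
    rw [← ev_compl hC] at sC
    rw [cpr_eq P _ _ (mXY x y), cpr_eq P _ _ (mXY x y)]
    field_simp
    linarith [sC]
  have hQ00 := hQ 0 0 hcell0.1
  have hQ01 := hQ 0 1 hcell0.2
  have hQ10 := hQ 1 0 hcell1.1
  have hQ11 := hQ 1 1 hcell1.2
  -- Step 6: conclusion by algebra.
  have key : pr P (ev X 1 ∩ ev Y 1 ∩ ev D d) * pr P (ev D d) -
      (pr P (ev X 1 ∩ ev Y 1 ∩ ev D d) + pr P (ev X 1 ∩ ev Y 0 ∩ ev D d)) *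
        (pr P (ev X 1 ∩ ev Y 1 ∩ ev D d) + pr P (ev X 0 ∩ ev Y 1 ∩ ev D d)) =
      pr P (ev X 1) * pr P (ev X 0) * pr P (ev Y 1) * pr P (ev Y 0) *
        (cpr P (ev D d) (ev C 1) - cpr P (ev D d) (ev C 0)) *
        (cpr P (ev D d) (ev C 1) *
            (cpr P (ev C 1) (ev X 0 ∩ ev Y 0) * cpr P (ev C 1) (ev X 1 ∩ ev Y 1) -
              cpr P (ev C 1) (ev X 1 ∩ ev Y 0) * cpr P (ev C 1) (ev X 0 ∩ ev Y 1)) -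
          cpr P (ev D d) (ev C 0) *
            (cpr P (ev C 0) (ev X 0 ∩ ev Y 0) * cpr P (ev C 0) (ev X 1 ∩ ev Y 1) -
              cpr P (ev C 0) (ev X 1 ∩ ev Y 0) * cpr P (ev C 0) (ev X 0 ∩ ev Y 1))) := by
    rw [hPDsum]
    rw [hN 0 0 (Or.inl rfl) (Or.inl rfl), hN 0 1 (Or.inl rfl) (Or.inr rfl),
      hN 1 0 (Or.inr rfl) (Or.inl rfl), hN 1 1 (Or.inr rfl) (Or.inr rfl)]
    rw [hQ00, hQ01, hQ10, hQ11]
    ring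
  rw [hcov0, hc1, hc2, hc3]
  have hstep : pr P (ev X 1 ∩ ev Y 1 ∩ ev D d) / pr P (ev D d) -
      (pr P (ev X 1 ∩ ev Y 1 ∩ ev D d) + pr P (ev X 1 ∩ ev Y 0 ∩ ev D d)) / pr P (ev D d) *
        ((pr P (ev X 1 ∩ ev Y 1 ∩ ev D d) + pr P (ev X 0 ∩ ev Y 1 ∩ ev D d)) / pr P (ev D d)) =
      (pr P (ev X 1 ∩ ev Y 1 ∩ ev D d) * pr P (ev D d) -
        (pr P (ev X 1 ∩ ev Y 1 ∩ ev D d) + pr P (ev X 1 ∩ ev Y 0 ∩ ev D d)) *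
          (pr P (ev X 1 ∩ ev Y 1 ∩ ev D d) + pr P (ev X 0 ∩ ev Y 1 ∩ ev D d))) /
        (pr P (ev D d)) ^ 2 := by
    field_simp
  rw [hstep, key]
  ring
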